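/- arXiv:2403.02501 — 3 statements merged into one kernel-verified Lean document; each statement's English description precedes it below -/
import Mathlib

section
/- Suppose w : [0,∞)×T² → ℝ is positive and satisfies the comparison bounds w̄[C₋,η₋](t) ≤ w(t,θ) ≤ w̄[C₊,η₊](t), where w̄[C,η](t) = (1 + Ce^{-2∫₀^t η})^{-1/2} and η₊(t), η₋(t) = 3/2 + O(e^{-2t}). Then |w(t,θ) - 1| ≤ C₀ e^{-3t} for some constant C₀ and all t ≥ 0. -/
open Real

/-- The barrier `w̄[C,η](t) = (1 + C e^{-2∫₀^t η})^{-1/2}`. -/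
noncomputable def barrier (C : ℝ) (η : ℝ → ℝ) (t : ℝ) : ℝ :=
  (1 + C * Real.exp (-2 * ∫ s in (0:ℝ)..t, η s)) ^ (-(1/2) : ℝ)

-- auxiliary lemmas

lemma exp_int (t : ℝ) : (∫ s in (0:ℝ)..t, Real.exp (-2*s)) = (1 - Real.exp (-2*t)) / 2 := by
  have h : ∀ s ∈ Set.uIcc (0:ℝ) t, HasDerivAt (fun x => -Real.exp (-2*x)/2) (Real.exp (-2*s)) s := by
    intro s _
    have : HasDerivAt (fun x : ℝ => -2*x) (-2) s := by
      simpa using (hasDerivAt_id s).const_mul (-2)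
    have := (this.exp).neg.div_const 2
    rw [show Real.exp (-2*s) = -(Real.exp (-2*s) * -2)/2 by ring]
    exact this
  have hint : IntervalIntegrable (fun s => Real.exp (-2*s)) MeasureTheory.volume 0 t :=
    (Real.continuous_exp.comp (continuous_const.mul continuous_id)).intervalIntegrable _ _
  rw [intervalIntegral.integral_eq_sub_of_hasDerivAt h hint]
  simp
  ring

set_option maxHeartbeats 1000000 in
lemma barrier_bound (C : ℝ) (η : ℝ → ℝ) (hη : Continuous η) (A : ℝ)
    (hA : ∀ t ≥ (0:ℝ), |η t - 3/2| ≤ A * Real.exp (-2 * t))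
    (hpos : ∀ t, 0 < 1 + C * Real.exp (-2 * ∫ s in (0:ℝ)..t, η s)) :
    ∃ K : ℝ, 0 ≤ K ∧ ∀ t ≥ (0:ℝ), |barrier C η t - 1| ≤ K * Real.exp (-3 * t) := by
  have hA0 : 0 ≤ A := by
    have := hA 0 le_rfl
    have h0 : (0:ℝ) ≤ |η 0 - 3/2| := abs_nonneg _
    nlinarith [Real.exp_pos (-2*(0:ℝ)), Real.exp_zero]
  have hexp : ∀ t ≥ (0:ℝ), -2 * (∫ s in (0:ℝ)..t, η s) ≤ A - 3*t := by
    intro t ht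
    have hint1 : IntervalIntegrable (fun s => η s - 3/2) MeasureTheory.volume 0 t :=
      (hη.sub continuous_const).intervalIntegrable _ _
    have hint2 : IntervalIntegrable (fun s => A * Real.exp (-2*s)) MeasureTheory.volume 0 t :=
      (continuous_const.mul (Real.continuous_exp.comp
        (continuous_const.mul continuous_id))).intervalIntegrable _ _
    have hmono : (∫ s in (0:ℝ)..t, (-(A * Real.exp (-2*s)))) ≤ ∫ s in (0:ℝ)..t, (η s - 3/2) := by
      apply intervalIntegral.integral_mono_on ht hint2.neg hint1
      intro s hs
      have h1 := abs_le.mp (hA s hs.1)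
      simp only [Pi.neg_apply]
      linarith [h1.1]
    have hcomp : (∫ s in (0:ℝ)..t, (-(A * Real.exp (-2*s)))) = -(A * ((1 - Real.exp (-2*t))/2)) := by
      rw [intervalIntegral.integral_neg, intervalIntegral.integral_const_mul, exp_int]
    have hsub : (∫ s in (0:ℝ)..t, (η s - 3/2)) = (∫ s in (0:ℝ)..t, η s) - (3/2)*t := by
      rw [intervalIntegral.integral_sub (hη.intervalIntegrable _ _)
        (continuous_const.intervalIntegrable _ _), intervalIntegral.integral_const]
      simp; ring
    have hexpt : Real.exp (-2*t) ≤ 1 := Real.exp_le_one_iff.mpr (by linarith)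
    nlinarith [hmono, hcomp, hsub, Real.exp_pos (-2*t)]
  set u : ℝ → ℝ := fun t => Real.exp (-2 * ∫ s in (0:ℝ)..t, η s) with hu
  have hub : ∀ t ≥ (0:ℝ), u t ≤ Real.exp A * Real.exp (-3*t) := by
    intro t ht
    rw [← Real.exp_add]
    exact Real.exp_le_exp.mpr (by linarith [hexp t ht])
  have hupos : ∀ t, 0 < u t := fun t => Real.exp_pos _
  set M : ℝ := |C| * Real.exp A with hM
  have hM0 : 0 ≤ M := mul_nonneg (abs_nonneg _) (Real.exp_pos _).le
  set T : ℝ := Real.log (2*(M+1)) / 3 with hT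
  have hT0 : 0 ≤ T := by
    apply div_nonneg _ (by norm_num)
    apply Real.log_nonneg; linarith
  have hgc : Continuous (fun t => 1 + C * u t) := by
    apply continuous_const.add
    apply continuous_const.mul
    apply Real.continuous_exp.comp
    apply continuous_const.mul
    exact intervalIntegral.continuous_primitive (fun a b => hη.intervalIntegrable a b) 0
  obtain ⟨x0, hx0, hmin⟩ := isCompact_Icc.exists_isMinOn (Set.nonempty_Icc.mpr hT0)
    hgc.continuousOn
  set δ : ℝ := min (1 + C * u x0) (1/2) with hδ
  have hδ0 : 0 < δ := lt_min (hpos x0) (by norm_num)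
  have hglb : ∀ t ≥ (0:ℝ), δ ≤ 1 + C * u t := by
    intro t ht
    rcases le_or_gt t T with h | h
    · exact le_trans (min_le_left _ _) (hmin ⟨ht, h⟩)
    · refine le_trans (min_le_right _ _) ?_
      have h1 : Real.exp (-3*t) ≤ 1 / (2*(M+1)) := by
        have h1a : Real.exp (-3*t) ≤ Real.exp (-3*T) := Real.exp_le_exp.mpr (by linarith)
        have h2 : Real.exp (-3*T) = 1/(2*(M+1)) := by
          have he : (-3:ℝ)*T = -Real.log (2*(M+1)) := by rw [hT]; ring
          rw [he, Real.exp_neg, Real.exp_log (by linarith), one_div]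
        linarith [h1a, h2.le]
      have h3 : |C| * u t ≤ M * Real.exp (-3*t) := by
        rw [hM, mul_assoc]
        exact mul_le_mul_of_nonneg_left (hub t ht) (abs_nonneg _)
      have h4 : M * Real.exp (-3*t) ≤ M * (1/(2*(M+1))) :=
        mul_le_mul_of_nonneg_left h1 hM0
      have h5 : M * (1/(2*(M+1))) ≤ 1/2 := by
        have hpos2 : (0:ℝ) < 2*(M+1) := by linarith
        rw [mul_one_div, div_le_iff₀ hpos2]
        nlinarith
      have h6 : -(|C| * u t) ≤ C * u t := by
        nlinarith [neg_abs_le C, hupos t]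
      linarith
  refine ⟨|C| * Real.exp A / Real.sqrt δ, by positivity, ?_⟩
  intro t ht
  set y : ℝ := 1 + C * u t with hy
  have hy0 : 0 < y := hpos t
  have hyδ : δ ≤ y := hglb t ht
  have hb : barrier C η t = (Real.sqrt y)⁻¹ := by
    rw [barrier, Real.rpow_neg hy0.le, ← Real.sqrt_eq_rpow]
  have hsy : 0 < Real.sqrt y := Real.sqrt_pos.mpr hy0
  have hsδ : 0 < Real.sqrt δ := Real.sqrt_pos.mpr hδ0
  have hsyδ : Real.sqrt δ ≤ Real.sqrt y := Real.sqrt_le_sqrt hyδ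
  have e1 : (Real.sqrt y)⁻¹ - 1 = (1 - Real.sqrt y)/Real.sqrt y := by
    field_simp
  have h2 : |1 - Real.sqrt y| ≤ |1 - y| := by
    have hid : (1 - Real.sqrt y) * (1 + Real.sqrt y) = 1 - y := by
      have := Real.sq_sqrt hy0.le
      nlinarith
    calc |1 - Real.sqrt y| ≤ |1 - Real.sqrt y| * (1 + Real.sqrt y) := by
          nlinarith [abs_nonneg (1 - Real.sqrt y), hsy]
      _ = |1 - y| := by rw [← hid, abs_mul, abs_of_pos (show (0:ℝ) < 1 + Real.sqrt y by linarith)]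
  have h3 : |1 - y| = |C| * u t := by
    have : (1:ℝ) - y = -(C * u t) := by rw [hy]; ring
    rw [this, abs_neg, abs_mul, abs_of_pos (hupos t)]
  rw [hb, e1, abs_div, abs_of_pos hsy]
  have hstep : |1 - Real.sqrt y| / Real.sqrt y ≤ (|C| * u t) / Real.sqrt δ := by
    rw [← h3]
    exact div_le_div₀ (abs_nonneg _) h2 hsδ hsyδ
  refine hstep.trans ?_
  rw [div_mul_eq_mul_div]
  have hnum : |C| * u t ≤ |C| * Real.exp A * Real.exp (-3*t) := by
    calc |C| * u t ≤ |C| * (Real.exp A * Real.exp (-3*t)) :=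
          mul_le_mul_of_nonneg_left (hub t ht) (abs_nonneg _)
      _ = |C| * Real.exp A * Real.exp (-3*t) := by ring
  exact div_le_div_of_nonneg_right hnum hsδ.le

/-- if a positive function `w` on `[0,∞)×T²` is squeezed between the
barriers `w̄[C₋,η₋]` and `w̄[C₊,η₊]` with `η₊, η₋ = 3/2 + O(e^{-2t})`, then
`|w - 1| ≤ C₀ e^{-3t}`. -/
theorem barrier_squeeze_decay
    (w : ℝ → EuclideanSpace ℝ (Fin 2) → ℝ)
    (Cm Cp : ℝ) (ηm ηp : ℝ → ℝ)
    (hηmc : Continuous ηm) (hηpc : Continuous ηp)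
    (hasymp : ∃ A : ℝ, ∀ t ≥ (0:ℝ),
      |ηp t - 3/2| ≤ A * Real.exp (-2 * t) ∧ |ηm t - 3/2| ≤ A * Real.exp (-2 * t))
    (hposm : ∀ t, 0 < 1 + Cm * Real.exp (-2 * ∫ s in (0:ℝ)..t, ηm s))
    (hposp : ∀ t, 0 < 1 + Cp * Real.exp (-2 * ∫ s in (0:ℝ)..t, ηp s))
    (hwpos : ∀ t x, 0 < w t x)
    (hsqueeze : ∀ t ≥ (0:ℝ), ∀ x, barrier Cm ηm t ≤ w t x ∧ w t x ≤ barrier Cp ηp t) :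
    ∃ C₀ : ℝ, ∀ t ≥ (0:ℝ), ∀ x, |w t x - 1| ≤ C₀ * Real.exp (-3 * t) := by
  obtain ⟨A, hAsym⟩ := hasymp
  obtain ⟨Km, hKm0, hKm⟩ := barrier_bound Cm ηm hηmc A (fun t ht => (hAsym t ht).2) hposm
  obtain ⟨Kp, hKp0, hKp⟩ := barrier_bound Cp ηp hηpc A (fun t ht => (hAsym t ht).1) hposp
  refine ⟨Km + Kp, ?_⟩
  intro t ht x
  obtain ⟨h1, h2⟩ := hsqueeze t ht x
  have bm := abs_le.mp (hKm t ht)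
  have bp := abs_le.mp (hKp t ht)
  have he : 0 < Real.exp (-3 * t) := Real.exp_pos _
  rw [abs_le]
  constructor
  · nlinarith [bm.1]
  · nlinarith [bp.2]
end

section
/- Let f : [0,∞) → ℝ≥0 be differentiable and satisfy f'(t) ≤ (-2(m+2) + C e^{-2t}) f(t) + C e^{-2(m+4)t} √f(t) for constants C > 0 and integer m ≥ 0. Then f(t) ≤ C_m e^{-2(m+2)t} for a constant C_m depending only on C, m, and f(0). -/
/-- if a nonnegative differentiable `f` satisfies
`f' ≤ (-2(m+2) + Ce^{-2t}) f + C e^{-2(m+4)t} √f` on `[0,∞)`, then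
`f(t) ≤ C_m e^{-2(m+2)t}` for a constant depending only on `C`, `m`, `f(0)`. -/
theorem ode_inequality_decay (f : ℝ → ℝ) (C : ℝ) (m : ℕ)
    (hC : 0 < C)
    (hnn : ∀ t, 0 ≤ f t)
    (hdiff : Differentiable ℝ f)
    (hineq : ∀ t ≥ (0:ℝ), deriv f t ≤
      (-2 * ((m : ℝ) + 2) + C * Real.exp (-2 * t)) * f t
        + C * Real.exp (-2 * ((m : ℝ) + 4) * t) * Real.sqrt (f t)) :
    ∃ Cm : ℝ, ∀ t ≥ (0:ℝ), f t ≤ Cm * Real.exp (-2 * ((m : ℝ) + 2) * t) := by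
  refine ⟨(f 0 + 1) * Real.exp C, fun t ht => ?_⟩
  set A : ℝ := 2 * ((m : ℝ) + 2) with hA
  have hA0 : (0:ℝ) < A := by positivity
  set φ : ℝ → ℝ := fun s =>
    (f s * Real.exp (A * s) + 1) * Real.exp (C * Real.exp (-2 * s)) with hφ
  have hder : ∀ s : ℝ, HasDerivAt φ
      ((deriv f s * Real.exp (A * s) + f s * (Real.exp (A * s) * A))
          * Real.exp (C * Real.exp (-2 * s))
        + (f s * Real.exp (A * s) + 1)
          * (Real.exp (C * Real.exp (-2 * s)) * (C * (Real.exp (-2 * s) * (-2))))) s := by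
    intro s
    have h1 : HasDerivAt (fun x : ℝ => A * x) (A * 1) s := (hasDerivAt_id s).const_mul A
    have h2 := h1.exp
    have h3 : HasDerivAt (fun x : ℝ => (-2 : ℝ) * x) ((-2) * 1) s :=
      (hasDerivAt_id s).const_mul (-2)
    have h4 := (h3.exp).const_mul C
    have h6 := h4.exp
    have h7 : HasDerivAt (fun x => f x * Real.exp (A * x) + 1)
        (deriv f s * Real.exp (A * s) + f s * (Real.exp (A * s) * (A * 1))) s :=
      ((hdiff s).hasDerivAt.mul h2).add_const 1
    have h8 := h7.mul h6
    convert h8 using 1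
    · rfl
    · rfl
    · rfl
    · ring
  have hcont : ContinuousOn φ (Set.Ici (0:ℝ)) := fun x _ =>
    ((hder x).continuousAt).continuousWithinAt
  have hdiffOn : DifferentiableOn ℝ φ (interior (Set.Ici (0:ℝ))) := fun x _ =>
    ((hder x).differentiableAt).differentiableWithinAt
  have hanti : AntitoneOn φ (Set.Ici (0:ℝ)) := by
    apply antitoneOn_of_deriv_nonpos (convex_Ici 0) hcont hdiffOn
    intro x hx
    rw [interior_Ici] at hx
    have hx0 : (0:ℝ) ≤ x := le_of_lt hx
    rw [(hder x).deriv]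
    set E := Real.exp (A * x) with hE
    set e2 := Real.exp (-2 * x) with he2
    set P := Real.exp (C * e2) with hP
    have hE0 : (0:ℝ) < E := Real.exp_pos _
    have hE1 : (1:ℝ) ≤ E := Real.one_le_exp (by positivity)
    have he20 : (0:ℝ) < e2 := Real.exp_pos _
    have hP0 : (0:ℝ) < P := Real.exp_pos _
    have hs0 : (0:ℝ) ≤ Real.sqrt (f x) := Real.sqrt_nonneg _
    have hsq : Real.sqrt (f x) ≤ f x + 1 := by
      nlinarith [Real.sq_sqrt (hnn x), Real.sqrt_nonneg (f x)]
    have hprod : Real.exp (-2 * ((m : ℝ) + 4) * x) * E = Real.exp (-4 * x) := by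
      rw [hE, ← Real.exp_add]
      congr 1
      rw [hA]; ring
    have h4le2 : Real.exp (-4 * x) ≤ e2 := Real.exp_le_exp.mpr (by linarith)
    have H := hineq x hx0
    have HA : deriv f x ≤ (-A + C * e2) * f x
        + C * Real.exp (-2 * ((m : ℝ) + 4) * x) * Real.sqrt (f x) := by
      rw [hA, he2]; convert H using 2; ring
    have key : deriv f x * E + f x * (E * A) ≤ 2 * C * e2 * (f x * E + 1) := by
      have step1 : deriv f x * E ≤ ((-A + C * e2) * f x
          + C * Real.exp (-2 * ((m : ℝ) + 4) * x) * Real.sqrt (f x)) * E :=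
        mul_le_mul_of_nonneg_right HA hE0.le
      have step2 : ((-A + C * e2) * f x
          + C * Real.exp (-2 * ((m : ℝ) + 4) * x) * Real.sqrt (f x)) * E
          = C * e2 * (f x * E) - A * (f x * E)
            + C * (Real.exp (-2 * ((m : ℝ) + 4) * x) * E) * Real.sqrt (f x) := by
        ring
      rw [step2, hprod] at step1
      have hsE : Real.sqrt (f x) ≤ f x * E + 1 := by
        nlinarith [hnn x]
      have step3 : C * Real.exp (-4 * x) * Real.sqrt (f x) ≤ C * e2 * (f x * E + 1) := by
        have h1 : C * Real.exp (-4 * x) * Real.sqrt (f x) ≤ C * e2 * Real.sqrt (f x) := by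
          apply mul_le_mul_of_nonneg_right _ hs0
          exact mul_le_mul_of_nonneg_left h4le2 hC.le
        have h2 : C * e2 * Real.sqrt (f x) ≤ C * e2 * (f x * E + 1) :=
          mul_le_mul_of_nonneg_left hsE (by positivity)
        linarith
      nlinarith [mul_nonneg (mul_nonneg hC.le he20.le) (mul_nonneg (hnn x) hE0.le)]
    nlinarith [mul_le_mul_of_nonneg_right key hP0.le]
  have ht' : t ∈ Set.Ici (0:ℝ) := ht
  have h0 : (0:ℝ) ∈ Set.Ici (0:ℝ) := Set.self_mem_Ici
  have hφt : φ t ≤ φ 0 := hanti h0 ht' ht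
  have hφ0 : φ 0 = (f 0 + 1) * Real.exp C := by
    simp [hφ]
  rw [hφ0] at hφt
  have hY1 : (1:ℝ) ≤ Real.exp (C * Real.exp (-2 * t)) := Real.one_le_exp (by positivity)
  have hX0 : (0:ℝ) ≤ f t * Real.exp (A * t) := mul_nonneg (hnn t) (Real.exp_pos _).le
  have h1 : f t * Real.exp (A * t) ≤ (f 0 + 1) * Real.exp C := by
    have hmain : f t * Real.exp (A * t) + 1
        ≤ (f t * Real.exp (A * t) + 1) * Real.exp (C * Real.exp (-2 * t)) := by
      nlinarith
    have : φ t = (f t * Real.exp (A * t) + 1) * Real.exp (C * Real.exp (-2 * t)) := rfl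
    linarith [this ▸ hφt]
  have hinv : Real.exp (-2 * ((m : ℝ) + 2) * t) * Real.exp (A * t) = 1 := by
    rw [← Real.exp_add, Real.exp_eq_one_iff, hA]; ring
  have hexp0 : (0:ℝ) < Real.exp (-2 * ((m : ℝ) + 2) * t) := Real.exp_pos _
  have h2 : f t = f t * Real.exp (A * t) * Real.exp (-2 * ((m : ℝ) + 2) * t) := by
    calc f t = f t * (Real.exp (-2 * ((m : ℝ) + 2) * t) * Real.exp (A * t)) := by
          rw [hinv, mul_one]
      _ = f t * Real.exp (A * t) * Real.exp (-2 * ((m : ℝ) + 2) * t) := by ring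
  rw [h2]
  exact mul_le_mul_of_nonneg_right h1 hexp0.le
end

section
/- Let H_t, H_+, V be functions on the leaf Σ_t of the normal flow with asymptotics H_+ = w^{-1}H_t, H_t = 2 + O(e^{-2t}), V = e^s, e^{3s}(w-1) = w_∞ + o(1), and area element dA_{γ_t} = e^{2s}(1+O(e^{-2s}))dA_σ, where s = t + f(θ) + O(e^{-2t}). Then lim_{t→∞} ∫_{Σ_t} V(H_t - H_+) dA_{γ_t} = ∫_{T²} 2 w_∞ dA_σ. -/
open Filter MeasureTheory

set_option maxHeartbeats 1000000

/-- convergence of the static Brown–York mass integrand on the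
normal-flow leaves.  The torus cross-section is an abstract finite measure
space `(T, dA_σ)`; the leaf `Σ_t` carries the height function `s = t + f(θ) +
O(e^{-2t})`, potential `V = e^s`, mean curvatures `H_t = 2 + O(e^{-2t})` and
`H_+ = w^{-1}H_t`, area density `a = e^{2s}(1 + O(e^{-2s}))` relative to
`dA_σ`, and `e^{3s}(w-1) → w_∞` uniformly.  Then
`∫_{Σ_t} V(H_t - H_+)dA_{γ_t} → ∫_{T²} 2w_∞ dA_σ`. -/
theorem static_BY_mass_convergence
    {T : Type*} [MeasureSpace T] [IsFiniteMeasure (volume : Measure T)]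
    (w H s a : ℝ → T → ℝ) (winf f : T → ℝ)
    (hw : ∀ t θ, 0 < w t θ)
    (hf : ∃ Cf : ℝ, ∀ θ, |f θ| ≤ Cf)
    (hs : ∃ C : ℝ, ∀ t ≥ (0:ℝ), ∀ θ, |s t θ - (t + f θ)| ≤ C * Real.exp (-2 * t))
    (hH : ∃ C : ℝ, ∀ t ≥ (0:ℝ), ∀ θ, |H t θ - 2| ≤ C * Real.exp (-2 * t))
    (hwlim : TendstoUniformly
      (fun t θ => Real.exp (3 * s t θ) * (w t θ - 1)) winf atTop)
    (ha : ∃ C : ℝ, ∀ t ≥ (0:ℝ), ∀ θ, |a t θ - Real.exp (2 * s t θ)| ≤ C)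
    (hwinf : Integrable winf)
    (hmeas : ∀ t, AEStronglyMeasurable
      (fun θ => Real.exp (s t θ) * (H t θ - (w t θ)⁻¹ * H t θ) * a t θ)
      (volume : Measure T)) :
    Tendsto
      (fun t => ∫ θ, Real.exp (s t θ) * (H t θ - (w t θ)⁻¹ * H t θ) * a t θ)
      atTop (nhds (∫ θ, 2 * winf θ)) := by
  obtain ⟨Cf, hCf⟩ := hf
  obtain ⟨Cs, hCs⟩ := hs
  obtain ⟨CH, hCH⟩ := hH
  obtain ⟨Ca, hCa⟩ := ha
  set D : ℝ := max Cf 0 + max Cs 0 with hDdef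
  have hD0 : 0 ≤ D := add_nonneg (le_max_right _ _) (le_max_right _ _)
  -- bounds on s
  have hsb : ∀ t ≥ (0:ℝ), ∀ θ, t - D ≤ s t θ ∧ s t θ ≤ t + D := by
    intro t ht θ
    have h1 := hCs t ht θ
    have h2 := hCf θ
    have hexp : Real.exp (-2 * t) ≤ 1 := by
      rw [Real.exp_le_one_iff]; linarith
    have hexp0 : 0 < Real.exp (-2 * t) := Real.exp_pos _
    have h3 : |s t θ - (t + f θ)| ≤ max Cs 0 := by
      calc |s t θ - (t + f θ)| ≤ Cs * Real.exp (-2 * t) := h1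
        _ ≤ max Cs 0 * Real.exp (-2 * t) := by
            exact mul_le_mul_of_nonneg_right (le_max_left _ _) hexp0.le
        _ ≤ max Cs 0 * 1 := by
            exact mul_le_mul_of_nonneg_left hexp (le_max_right _ _)
        _ = max Cs 0 := mul_one _
    rw [abs_le] at h3 h2
    have h4 : Cf ≤ max Cf 0 := le_max_left _ _
    exact ⟨by linarith [h2.1, h2.2, h3.1, h3.2], by linarith [h2.1, h2.2, h3.1, h3.2]⟩
  -- key algebraic identity
  have key : ∀ t θ, Real.exp (s t θ) * (H t θ - (w t θ)⁻¹ * H t θ) * a t θ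
      = H t θ * (w t θ)⁻¹ * (Real.exp (3 * s t θ) * (w t θ - 1))
        * (Real.exp (-2 * s t θ) * a t θ) := by
    intro t θ
    have hwt : w t θ ≠ 0 := (hw t θ).ne'
    have h1 : Real.exp (3 * s t θ) * Real.exp (-2 * s t θ) = Real.exp (s t θ) := by
      rw [← Real.exp_add]; ring_nf
    have h2 : H t θ - (w t θ)⁻¹ * H t θ = H t θ * (w t θ)⁻¹ * (w t θ - 1) := by
      field_simp
    rw [h2, ← h1]; ring
  -- lower bound on winf
  have hUnif : ∀ ε > (0:ℝ), ∀ᶠ t in atTop, ∀ θ,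
      dist (winf θ) (Real.exp (3 * s t θ) * (w t θ - 1)) < ε :=
    Metric.tendstoUniformly_iff.mp hwlim
  obtain ⟨T0, hT0⟩ := eventually_atTop.mp (hUnif 1 one_pos)
  set T1 : ℝ := max T0 0 with hT1def
  set B : ℝ := Real.exp (3 * (T1 + D)) + 1 with hBdef
  have hB0 : 0 < B := by positivity
  have hwinf_lb : ∀ θ, -B ≤ winf θ := by
    intro θ
    have h1 := hT0 T1 (le_max_left _ _) θ
    rw [Real.dist_eq, abs_lt] at h1
    have h2 : -Real.exp (3 * s T1 θ) < Real.exp (3 * s T1 θ) * (w T1 θ - 1) := by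
      have := hw T1 θ
      nlinarith [Real.exp_pos (3 * s T1 θ)]
    have h3 : s T1 θ ≤ T1 + D := (hsb T1 (le_max_right _ _) θ).2
    have h4 : Real.exp (3 * s T1 θ) ≤ Real.exp (3 * (T1 + D)) :=
      Real.exp_le_exp.mpr (by linarith)
    simp only [hBdef]
    linarith
  -- eventual facts
  have evA : ∀ᶠ t in atTop, ∀ θ,
      dist (winf θ) (Real.exp (3 * s t θ) * (w t θ - 1)) < 1 := hUnif 1 one_pos
  have hexp_lim : Tendsto (fun t : ℝ => Real.exp (-2 * t)) atTop (nhds 0) := by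
    have h1 : Tendsto (fun t : ℝ => -2 * t) atTop atBot := by
      have := (tendsto_id.const_mul_atTop (by norm_num : (0:ℝ) < 2))
      have h2 := tendsto_neg_atBot_iff.mpr this
      refine h2.congr fun t => ?_
      simp only [id_eq]; ring
    exact Real.tendsto_exp_atBot.comp h1
  have hlimCH : Tendsto (fun t : ℝ => CH * Real.exp (-2 * t)) atTop (nhds 0) := by
    simpa using hexp_lim.const_mul CH
  have evB : ∀ᶠ t : ℝ in atTop, CH * Real.exp (-2 * t) ≤ 1 :=
    hlimCH.eventually_le_const one_pos
  have evD : ∀ᶠ t : ℝ in atTop, 2 * (B + 1) ≤ Real.exp (3 * (t - D)) := by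
    have h1 : Tendsto (fun t : ℝ => 3 * (t - D)) atTop atTop := by
      have h2 : Tendsto (fun t : ℝ => t - D) atTop atTop :=
        tendsto_atTop_add_const_right atTop (-D) tendsto_id
      exact h2.const_mul_atTop (by norm_num)
    exact (Real.tendsto_exp_atTop.comp h1).eventually_ge_atTop _
  refine tendsto_integral_filter_of_dominated_convergence
    (fun θ => 6 * (1 + max Ca 0) * (|winf θ| + 1))
    (Eventually.of_forall hmeas) ?_ ?_ ?_
  · -- bound
    filter_upwards [evA, evB, evD, eventually_ge_atTop (max D 0)] with t hA hB hDd htD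
    refine Eventually.of_forall fun θ => ?_
    have ht0 : (0:ℝ) ≤ t := le_trans (le_max_right _ _) htD
    have htD' : D ≤ t := le_trans (le_max_left _ _) htD
    have hsl := (hsb t ht0 θ).1
    have hs0 : 0 ≤ s t θ := by linarith
    have hwt := hw t θ
    -- |H| ≤ 3
    have hH3 : |H t θ| ≤ 3 := by
      have h1 := hCH t ht0 θ
      rw [abs_le] at h1 ⊢
      constructor <;> nlinarith [Real.exp_pos (-2 * t)]
    -- |g| ≤ |winf θ| + 1
    have hgd := hA θ
    rw [Real.dist_eq, abs_lt] at hgd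
    have hg : |Real.exp (3 * s t θ) * (w t θ - 1)| ≤ |winf θ| + 1 := by
      rw [abs_le]
      cases' abs_le.mp (le_refl |winf θ|) with h1 h2
      constructor <;> linarith
    -- w ≥ 1/2
    have he3 : 2 * (B + 1) ≤ Real.exp (3 * s t θ) := by
      calc 2 * (B + 1) ≤ Real.exp (3 * (t - D)) := hDd
        _ ≤ Real.exp (3 * s t θ) := Real.exp_le_exp.mpr (by linarith)
    have hwhalf : (1:ℝ)/2 ≤ w t θ := by
      have h1 : -(B + 1) ≤ Real.exp (3 * s t θ) * (w t θ - 1) := by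
        have := hwinf_lb θ; linarith
      nlinarith [Real.exp_pos (3 * s t θ)]
    have hwinv : |(w t θ)⁻¹| ≤ 2 := by
      rw [abs_of_pos (inv_pos.mpr hwt)]
      calc (w t θ)⁻¹ ≤ ((1:ℝ)/2)⁻¹ := inv_anti₀ (by norm_num) hwhalf
        _ = 2 := by norm_num
    -- |r| ≤ 1 + max Ca 0
    have hr : |Real.exp (-2 * s t θ) * a t θ| ≤ 1 + max Ca 0 := by
      have h1 := hCa t ht0 θ
      have h2 : |a t θ| ≤ Real.exp (2 * s t θ) + max Ca 0 := by
        have h3 := abs_le.mp h1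
        rw [abs_le]
        have h4 : Ca ≤ max Ca 0 := le_max_left _ _
        constructor <;> nlinarith [Real.exp_pos (2 * s t θ)]
      have h5 : Real.exp (-2 * s t θ) * Real.exp (2 * s t θ) = 1 := by
        rw [← Real.exp_add]; ring_nf; exact Real.exp_zero
      have h6 : Real.exp (-2 * s t θ) ≤ 1 := by
        rw [Real.exp_le_one_iff]; linarith
      rw [abs_mul, abs_of_pos (Real.exp_pos _)]
      calc Real.exp (-2 * s t θ) * |a t θ|
          ≤ Real.exp (-2 * s t θ) * (Real.exp (2 * s t θ) + max Ca 0) :=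
            mul_le_mul_of_nonneg_left h2 (Real.exp_pos _).le
        _ = 1 + Real.exp (-2 * s t θ) * max Ca 0 := by rw [mul_add, h5]
        _ ≤ 1 + 1 * max Ca 0 :=
            add_le_add_right (mul_le_mul_of_nonneg_right h6 (le_max_right _ _)) 1
        _ = 1 + max Ca 0 := by ring
    rw [Real.norm_eq_abs, key t θ, abs_mul, abs_mul, abs_mul]
    calc |H t θ| * |(w t θ)⁻¹| * |Real.exp (3 * s t θ) * (w t θ - 1)|
          * |Real.exp (-2 * s t θ) * a t θ|
        ≤ 3 * 2 * (|winf θ| + 1) * (1 + max Ca 0) := by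
          refine mul_le_mul (mul_le_mul (mul_le_mul hH3 hwinv (abs_nonneg _)
            (by norm_num)) hg (abs_nonneg _) (by positivity)) hr (abs_nonneg _)
            (by positivity)
      _ = 6 * (1 + max Ca 0) * (|winf θ| + 1) := by ring
  · exact (hwinf.abs.add (integrable_const 1)).const_mul _
  · -- pointwise limit
    refine Eventually.of_forall fun θ => ?_
    have limg : Tendsto (fun t => Real.exp (3 * s t θ) * (w t θ - 1)) atTop
        (nhds (winf θ)) := hwlim.tendsto_at θ
    have lims : Tendsto (fun t => s t θ) atTop atTop := by
      refine tendsto_atTop_mono' atTop ?_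
        (tendsto_atTop_add_const_right atTop (-D) tendsto_id)
      filter_upwards [eventually_ge_atTop (0:ℝ)] with t ht
      have := (hsb t ht θ).1
      simp only [id]
      linarith
    have lime3 : Tendsto (fun t => Real.exp (-(3 * s t θ))) atTop (nhds 0) := by
      refine Real.tendsto_exp_atBot.comp ?_
      exact tendsto_neg_atBot_iff.mpr (lims.const_mul_atTop (by norm_num))
    have lime2 : Tendsto (fun t => Real.exp (-2 * s t θ)) atTop (nhds 0) := by
      refine Real.tendsto_exp_atBot.comp ?_
      have h1 := tendsto_neg_atBot_iff.mpr
        (lims.const_mul_atTop (by norm_num : (0:ℝ) < 2))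
      exact h1.congr fun t => by ring
    have limw : Tendsto (fun t => w t θ) atTop (nhds 1) := by
      have h : Tendsto (fun t => 1 + Real.exp (-(3 * s t θ))
          * (Real.exp (3 * s t θ) * (w t θ - 1))) atTop (nhds (1 + 0 * winf θ)) :=
        tendsto_const_nhds.add (lime3.mul limg)
      rw [show (1:ℝ) + 0 * winf θ = 1 by ring] at h
      refine h.congr fun t => ?_
      have h5 : Real.exp (-(3 * s t θ)) * Real.exp (3 * s t θ) = 1 := by
        rw [← Real.exp_add]; ring_nf; exact Real.exp_zero
      calc 1 + Real.exp (-(3 * s t θ)) * (Real.exp (3 * s t θ) * (w t θ - 1))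
          = 1 + (Real.exp (-(3 * s t θ)) * Real.exp (3 * s t θ)) * (w t θ - 1) := by ring
        _ = w t θ := by rw [h5]; ring
    have limH : Tendsto (fun t => H t θ) atTop (nhds 2) := by
      have h0 : Tendsto (fun t => H t θ - 2) atTop (nhds 0) := by
        have hev : ∀ᶠ t : ℝ in atTop, ‖H t θ - 2‖ ≤ CH * Real.exp (-2 * t) := by
          filter_upwards [eventually_ge_atTop (0:ℝ)] with t ht
          rw [Real.norm_eq_abs]; exact hCH t ht θ
        exact squeeze_zero_norm' hev hlimCH
      have := h0.add_const 2
      rw [zero_add] at this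
      exact this.congr fun t => by ring
    have limr : Tendsto (fun t => Real.exp (-2 * s t θ) * a t θ) atTop (nhds 1) := by
      have h0 : Tendsto (fun t => Real.exp (-2 * s t θ) * a t θ - 1) atTop (nhds 0) := by
        have hlimCa : Tendsto (fun t => max Ca 0 * Real.exp (-2 * s t θ)) atTop
            (nhds 0) := by simpa using lime2.const_mul (max Ca 0)
        have hev : ∀ᶠ t : ℝ in atTop, ‖Real.exp (-2 * s t θ) * a t θ - 1‖
            ≤ max Ca 0 * Real.exp (-2 * s t θ) := by
          filter_upwards [eventually_ge_atTop (0:ℝ)] with t ht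
          have h1 := hCa t ht θ
          have h5 : Real.exp (-2 * s t θ) * Real.exp (2 * s t θ) = 1 := by
            rw [← Real.exp_add]; ring_nf; exact Real.exp_zero
          have h6 : Real.exp (-2 * s t θ) * a t θ - 1
              = Real.exp (-2 * s t θ) * (a t θ - Real.exp (2 * s t θ)) := by
            rw [mul_sub, h5]
          rw [Real.norm_eq_abs, h6, abs_mul, abs_of_pos (Real.exp_pos _)]
          have h7 : Ca ≤ max Ca 0 := le_max_left _ _
          have := Real.exp_pos (-2 * s t θ)
          nlinarith [abs_nonneg (a t θ - Real.exp (2 * s t θ))]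
        exact squeeze_zero_norm' hev hlimCa
      have := h0.add_const 1
      rw [zero_add] at this
      exact this.congr fun t => by ring
    have prod := ((limH.mul (limw.inv₀ one_ne_zero)).mul limg).mul limr
    rw [show (2:ℝ) * 1⁻¹ * winf θ * 1 = 2 * winf θ by norm_num] at prod
    exact prod.congr fun t => (key t θ).symm
end
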